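/- An element z of the free associative algebra Afr_n lies in the free Lie subalgebra fr_n (generated by ω_1,…,ω_n under the commutator bracket) if and only if Δ(z) = z⊗1 + 1⊗z, where Δ is the coproduct determined by Δω_j = ω_j⊗1 + 1⊗ω_j (Friedrichs' criterion). -/

import Mathlib

open scoped BigOperators ENNReal
open MeasureTheory

abbrev Word (n : ℕ) := List (Fin n)

abbrev Series (n : ℕ) := Word n → ℝ

namespace Series

variable {n : ℕ}

/-- Multiplication of formal noncommutative series: the coefficient at a word `α`
is the sum over all splittings `α = β ++ γ` of `x β * y γ`. -/
noncomputable def mul (x y : Series n) : Series n :=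
  fun α => ∑ k ∈ Finset.range (α.length + 1), x (α.take k) * y (α.drop k)

/-- The unit series `1`. -/
def one : Series n := fun α => if α = [] then 1 else 0

def add (x y : Series n) : Series n := fun α => x α + y α

def sub (x y : Series n) : Series n := fun α => x α - y α

def smul (c : ℝ) (x : Series n) : Series n := fun α => c * x α

def neg (x : Series n) : Series n := fun α => - x α

/-- The monomial `ω^α`. -/
def mono (α : Word n) : Series n := fun β => if β = α then 1 else 0

noncomputable def pow (x : Series n) : ℕ → Series n
  | 0 => one
  | m + 1 => mul (pow x m) x

/-- The norm `‖x‖_ξ = Σ_α ξ^{|α|} |c_α|`, valued in `[0,∞]`. -/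
noncomputable def xiNorm (ξ : ℝ) (x : Series n) : ℝ≥0∞ :=
  ∑' α : Word n, ENNReal.ofReal (ξ ^ α.length * |x α|)

/-- The rescaling map `M_ξ`, multiplying the degree-`j` component by `ξ^j`. -/
noncomputable def Mmap (ξ : ℝ) (x : Series n) : Series n :=
  fun α => ξ ^ α.length * x α

/-- Exponential of a series with zero constant term (each coefficient is a finite sum,
since `x^m` has zero coefficients in degrees `< m`). -/
noncomputable def expS (x : Series n) : Series n :=
  fun α => ∑ m ∈ Finset.range (α.length + 1), (pow x m) α / m.factorial

/-- Logarithm `ln(1+y)` for `y` with zero constant term (the `m = 0` term vanishes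
since division by `0` yields `0`). -/
noncomputable def lnS (y : Series n) : Series n :=
  fun α => ∑ m ∈ Finset.range (α.length + 1), (-1 : ℝ) ^ (m + 1) * (pow y m) α / m

/-- Inverse of a series `g` with constant term `1`, via the geometric series in `1 - g`. -/
noncomputable def invS (g : Series n) : Series n :=
  fun α => ∑ m ∈ Finset.range (α.length + 1), (pow (sub one g) m) α

/-- The canonical anti-automorphism `x ↦ x°`, with `ω_j° = -ω_j`, `(xy)° = y°x°`. -/
def circ (x : Series n) : Series n := fun α => (-1 : ℝ) ^ α.length * x α.reverse

/-- The degree-`j` homogeneous component. -/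
def trunc (j : ℕ) (x : Series n) : Series n := fun α => if α.length = j then x α else 0

/-- The completed tensor square: formal series in `ω^α ⊗ ω^β`. -/
abbrev Series2 (n : ℕ) := Word n × Word n → ℝ

noncomputable def mul2 (x y : Series2 n) : Series2 n :=
  fun p => ∑ k ∈ Finset.range (p.1.length + 1), ∑ l ∈ Finset.range (p.2.length + 1),
    x (p.1.take k, p.2.take l) * y (p.1.drop k, p.2.drop l)

def tens (x y : Series n) : Series2 n := fun p => x p.1 * y p.2

def add2 (x y : Series2 n) : Series2 n := fun p => x p + y p

def one2 : Series2 n := fun p => if p.1 = [] ∧ p.2 = [] then 1 else 0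

/-- `shc α β γ` is the number of ways the word `α` arises as a shuffle of `β` and `γ`,
i.e. the number of subsets `I` of positions of `α` with `α|I = β` and `α|∁I = γ`. -/
def shc : Word n → Word n → Word n → ℕ
  | [], β, γ => if β = [] ∧ γ = [] then 1 else 0
  | a :: α, β, γ =>
      (match β with
        | b :: β' => if b = a then shc α β' γ else 0
        | [] => 0) +
      (match γ with
        | c :: γ' => if c = a then shc α β γ' else 0
        | [] => 0)

/-- The coproduct `Δ`, the continuous algebra homomorphism with
`Δ ω_j = ω_j ⊗ 1 + 1 ⊗ ω_j`; its coefficient at `(β, γ)` is the sum of the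
coefficients of `x` over all shuffles of `β` and `γ`. -/
noncomputable def coprod (x : Series n) : Series2 n :=
  fun p => ∑ f : Fin (p.1.length + p.2.length) → Fin n,
    (shc (List.ofFn f) p.1 p.2 : ℝ) * x (List.ofFn f)

/-- Membership in the free Lie algebra `fr_n ⊂ Afr_n`: the smallest Lie subalgebra
(under `[a,b] = ab - ba`) containing the generators `ω_j`. -/
inductive InFr : Series n → Prop
  | zero : InFr (fun _ => 0)
  | gen (j : Fin n) : InFr (mono [j])
  | add {x y : Series n} : InFr x → InFr y → InFr (Series.add x y)
  | smul (c : ℝ) {x : Series n} : InFr x → InFr (Series.smul c x)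
  | bracket {x y : Series n} : InFr x → InFr y → InFr (sub (mul x y) (mul y x))

/-- The subword of `α` on a set `I` of positions. -/
def restr (α : Word n) (I : Finset (Fin α.length)) : Word n :=
  ((List.finRange α.length).filter (fun i => i ∈ I)).map (fun i => α.get i)

end Series

namespace Series

variable {n : ℕ}

lemma shc_nil_nil_nil : (shc ([] : Word n) [] [] : ℕ) = 1 := by simp [shc]

lemma shc_length : ∀ (α β γ : Word n), α.length ≠ β.length + γ.length → shc α β γ = 0 := by
  intro α
  induction α with
  | nil =>
    intro β γ h
    simp only [shc]
    rw [if_neg]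
    rintro ⟨rfl, rfl⟩
    simp at h
  | cons a α ih =>
    intro β γ h
    simp only [shc]
    have h1 : (match β with
        | b :: β' => if b = a then shc α β' γ else 0
        | [] => 0) = 0 := by
      cases β with
      | nil => rfl
      | cons b β' =>
        by_cases hb : b = a
        · simp only [hb, if_pos rfl]
          apply ih
          simp at h ⊢
          omega
        · simp [hb]
    have h2 : (match γ with
        | c :: γ' => if c = a then shc α β γ' else 0
        | [] => 0) = 0 := by
      cases γ with
      | nil => rfl
      | cons c γ' =>
        by_cases hc : c = a
        · simp only [hc, if_pos rfl]
          apply ih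
          simp at h ⊢
          omega
        · simp [hc]
    rw [h1, h2]

/-- The finset of all words of length `m`. -/
def W (n m : ℕ) : Finset (Word n) := Finset.image List.ofFn (Finset.univ : Finset (Fin m → Fin n))

lemma mem_W {m : ℕ} {α : Word n} : α ∈ W n m ↔ α.length = m := by
  constructor
  · rintro h
    simp only [W, Finset.mem_image] at h
    obtain ⟨f, -, rfl⟩ := h
    simp
  · intro h
    simp only [W, Finset.mem_image]
    refine ⟨fun i => α.get (Fin.cast h.symm i), Finset.mem_univ _, ?_⟩
    subst h
    simp [List.ofFn_getElem]

lemma coprod_eq_W (z : Series n) (p : Word n × Word n) :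
    coprod z p = ∑ α ∈ W n (p.1.length + p.2.length), (shc α p.1 p.2 : ℝ) * z α := by
  rw [W, Finset.sum_image]
  · rfl
  · intro f _ g _ h
    exact List.ofFn_injective h

lemma sum_W_mono (α : Word n) (β γ : Word n) (m : ℕ) :
    ∑ α' ∈ W n m, (shc α' β γ : ℝ) * mono α α' = if α.length = m ∧ α.length = β.length + γ.length then (shc α β γ : ℝ) else 0 := by
  rw [Finset.sum_congr rfl (fun α' _ => by rw [mono])]
  simp only [mul_ite, mul_one, mul_zero]
  rw [Finset.sum_ite_eq' (W n m) α (fun α' => (shc α' β γ : ℝ))]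
  by_cases h1 : α.length = m
  · rw [if_pos (mem_W.mpr h1)]
    by_cases h2 : α.length = β.length + γ.length
    · rw [if_pos ⟨h1, h2⟩]
    · rw [if_neg (by tauto), shc_length α β γ h2]; simp
  · rw [if_neg (fun hh => h1 (mem_W.mp hh)), if_neg (by tauto)]

end Series
namespace Series

variable {n : ℕ}

lemma shc_nil (β γ : Word n) : shc [] β γ = if β = [] ∧ γ = [] then 1 else 0 := rfl

lemma shc_cons_eq (a : Fin n) (α β γ : Word n) :
    shc (a :: α) β γ =
      (match β with | b :: β' => if b = a then shc α β' γ else 0 | [] => 0) +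
      (match γ with | c :: γ' => if c = a then shc α β γ' else 0 | [] => 0) := rfl

private lemma auxB (a : Fin n) (α₁ α₂ β γ : Word n)
    (ih : ∀ β γ : Word n, shc (α₁ ++ α₂) β γ =
      ∑ k ∈ Finset.range (β.length + 1), ∑ l ∈ Finset.range (γ.length + 1),
        shc α₁ (β.take k) (γ.take l) * shc α₂ (β.drop k) (γ.drop l)) :
    (match β with | b :: β' => if b = a then shc (α₁ ++ α₂) β' γ else 0 | [] => 0)
        = ∑ k ∈ Finset.range (β.length + 1), ∑ l ∈ Finset.range (γ.length + 1),
            (match β.take k with | b :: t => if b = a then shc α₁ t (γ.take l) else 0 | [] => 0)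
              * shc α₂ (β.drop k) (γ.drop l) := by
  cases β with
  | nil => simp
  | cons b β' =>
    rw [Finset.sum_range_succ']
    simp only [List.take_succ_cons, List.drop_succ_cons, List.take_zero, List.drop_zero]
    by_cases hb : b = a
    · rw [ih β' γ]; simp [hb]
    · simp [hb]

private lemma auxC (a : Fin n) (α₁ α₂ β γ : Word n)
    (ih : ∀ β γ : Word n, shc (α₁ ++ α₂) β γ =
      ∑ k ∈ Finset.range (β.length + 1), ∑ l ∈ Finset.range (γ.length + 1),
        shc α₁ (β.take k) (γ.take l) * shc α₂ (β.drop k) (γ.drop l)) :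
    (match γ with | c :: γ' => if c = a then shc (α₁ ++ α₂) β γ' else 0 | [] => 0)
        = ∑ k ∈ Finset.range (β.length + 1), ∑ l ∈ Finset.range (γ.length + 1),
            (match γ.take l with | c :: t => if c = a then shc α₁ (β.take k) t else 0 | [] => 0)
              * shc α₂ (β.drop k) (γ.drop l) := by
  cases γ with
  | nil => simp
  | cons c γ' =>
    rw [Finset.sum_comm, Finset.sum_range_succ']
    simp only [List.take_succ_cons, List.drop_succ_cons, List.take_zero, List.drop_zero]
    by_cases hc : c = a
    · rw [ih β γ', Finset.sum_comm]; simp [hc]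
    · simp [hc]

lemma shc_append : ∀ (α₁ α₂ β γ : Word n),
    shc (α₁ ++ α₂) β γ =
      ∑ k ∈ Finset.range (β.length + 1), ∑ l ∈ Finset.range (γ.length + 1),
        shc α₁ (β.take k) (γ.take l) * shc α₂ (β.drop k) (γ.drop l) := by
  intro α₁
  induction α₁ with
  | nil =>
    intro α₂ β γ
    rw [List.nil_append]
    rw [Finset.sum_eq_single_of_mem 0 (Finset.mem_range.mpr (by omega))]
    · rw [Finset.sum_eq_single_of_mem 0 (Finset.mem_range.mpr (by omega))]
      · simp [shc_nil]
      · intro l hl hl0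
        rw [shc_nil, if_neg, zero_mul]
        rintro ⟨-, h2⟩
        rw [List.take_eq_nil_iff] at h2
        rcases h2 with h | h
        · exact hl0 h
        · rw [h] at hl; simp at hl; omega
    · intro k hk hk0
      apply Finset.sum_eq_zero
      intro l hl
      rw [shc_nil, if_neg, zero_mul]
      rintro ⟨h1, -⟩
      rw [List.take_eq_nil_iff] at h1
      rcases h1 with h | h
      · exact hk0 h
      · rw [h] at hk; simp at hk; omega
  | cons a α₁ ih =>
    intro α₂ β γ
    rw [List.cons_append, shc_cons_eq]
    rw [auxB a α₁ α₂ β γ (fun β γ => ih α₂ β γ), auxC a α₁ α₂ β γ (fun β γ => ih α₂ β γ)]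
    rw [← Finset.sum_add_distrib]
    apply Finset.sum_congr rfl
    intro k _
    rw [← Finset.sum_add_distrib]
    apply Finset.sum_congr rfl
    intro l _
    rw [shc_cons_eq, add_mul]
    rfl

end Series
namespace Series

variable {n : ℕ}

lemma sum_W_shc (x : Series n) (j : ℕ) (β' γ' : Word n) :
    ∑ α ∈ W n j, (shc α β' γ' : ℝ) * x α
      = if j = β'.length + γ'.length then coprod x (β', γ') else 0 := by
  split
  · next h => rw [coprod_eq_W, h]
  · next h =>
    apply Finset.sum_eq_zero
    intro α hα
    rw [shc_length α β' γ' (by rw [mem_W.mp hα]; exact h)]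
    simp

lemma sum_W_split (m j : ℕ) (hj : j ≤ m) (F : Word n → Word n → ℝ) :
    ∑ α ∈ W n m, F (α.take j) (α.drop j)
      = ∑ α₁ ∈ W n j, ∑ α₂ ∈ W n (m - j), F α₁ α₂ := by
  rw [← Finset.sum_product']
  refine Finset.sum_nbij' (fun α => (α.take j, α.drop j)) (fun q => q.1 ++ q.2) ?_ ?_ ?_ ?_ ?_
  · intro α hα
    have h := mem_W.mp hα
    rw [Finset.mem_product]
    constructor
    · exact mem_W.mpr (by simp [h]; omega)
    · exact mem_W.mpr (by simp [h])
  · intro q hq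
    rw [Finset.mem_product] at hq
    exact mem_W.mpr (by simp [mem_W.mp hq.1, mem_W.mp hq.2]; omega)
  · intro α hα
    exact List.take_append_drop j α
  · intro q hq
    rw [Finset.mem_product] at hq
    have h1 := mem_W.mp hq.1
    ext1 <;> simp [List.take_append, List.drop_append, h1]
  · intro α hα
    rfl

lemma sum_factor {σ τ : Type*} (s₁ : Finset σ) (s₂ : Finset τ) (r₁ r₂ : Finset ℕ)
    (A : σ → ℕ → ℕ → ℝ) (B : τ → ℕ → ℕ → ℝ) :
    ∑ a ∈ s₁, ∑ b ∈ s₂, ∑ k ∈ r₁, ∑ l ∈ r₂, A a k l * B b k l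
      = ∑ k ∈ r₁, ∑ l ∈ r₂, (∑ a ∈ s₁, A a k l) * (∑ b ∈ s₂, B b k l) := by
  calc ∑ a ∈ s₁, ∑ b ∈ s₂, ∑ k ∈ r₁, ∑ l ∈ r₂, A a k l * B b k l
      = ∑ a ∈ s₁, ∑ k ∈ r₁, ∑ b ∈ s₂, ∑ l ∈ r₂, A a k l * B b k l :=
        Finset.sum_congr rfl (fun a _ => Finset.sum_comm)
    _ = ∑ a ∈ s₁, ∑ k ∈ r₁, ∑ l ∈ r₂, ∑ b ∈ s₂, A a k l * B b k l :=
        Finset.sum_congr rfl (fun a _ => Finset.sum_congr rfl (fun k _ => Finset.sum_comm))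
    _ = ∑ k ∈ r₁, ∑ a ∈ s₁, ∑ l ∈ r₂, ∑ b ∈ s₂, A a k l * B b k l := Finset.sum_comm
    _ = ∑ k ∈ r₁, ∑ l ∈ r₂, ∑ a ∈ s₁, ∑ b ∈ s₂, A a k l * B b k l :=
        Finset.sum_congr rfl (fun k _ => Finset.sum_comm)
    _ = ∑ k ∈ r₁, ∑ l ∈ r₂, (∑ a ∈ s₁, A a k l) * (∑ b ∈ s₂, B b k l) :=
        Finset.sum_congr rfl (fun k _ => Finset.sum_congr rfl
          (fun l _ => (Finset.sum_mul_sum _ _ _ _).symm))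

lemma coprod_mul (x y : Series n) (p : Word n × Word n) :
    coprod (mul x y) p = mul2 (coprod x) (coprod y) p := by
  obtain ⟨β, γ⟩ := p
  show coprod (mul x y) (β, γ)
    = ∑ k ∈ Finset.range (β.length + 1), ∑ l ∈ Finset.range (γ.length + 1),
        coprod x (β.take k, γ.take l) * coprod y (β.drop k, γ.drop l)
  rw [coprod_eq_W]
  have step2 : ∑ α ∈ W n (β.length + γ.length), (shc α β γ : ℝ) * mul x y α
      = ∑ j ∈ Finset.range (β.length + γ.length + 1), ∑ α ∈ W n (β.length + γ.length),
          (shc α β γ : ℝ) * (x (α.take j) * y (α.drop j)) := by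
    rw [Finset.sum_comm]
    apply Finset.sum_congr rfl
    intro α hα
    rw [mul, mem_W.mp hα, Finset.mul_sum]
  rw [step2]
  have step3 : ∀ j ∈ Finset.range (β.length + γ.length + 1),
      ∑ α ∈ W n (β.length + γ.length), (shc α β γ : ℝ) * (x (α.take j) * y (α.drop j))
        = ∑ k ∈ Finset.range (β.length + 1), ∑ l ∈ Finset.range (γ.length + 1),
            (∑ α₁ ∈ W n j, (shc α₁ (β.take k) (γ.take l) : ℝ) * x α₁)
              * (∑ α₂ ∈ W n (β.length + γ.length - j),
                  (shc α₂ (β.drop k) (γ.drop l) : ℝ) * y α₂) := by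
    intro j hj
    rw [Finset.mem_range] at hj
    have hjm : j ≤ β.length + γ.length := by omega
    have e1 : ∑ α ∈ W n (β.length + γ.length), (shc α β γ : ℝ) * (x (α.take j) * y (α.drop j))
        = ∑ α ∈ W n (β.length + γ.length),
            (fun a b => (shc (a ++ b) β γ : ℝ) * (x a * y b)) (α.take j) (α.drop j) := by
      apply Finset.sum_congr rfl
      intro α _
      simp only [List.take_append_drop]
    rw [e1, sum_W_split (β.length + γ.length) j hjm
      (fun a b => (shc (a ++ b) β γ : ℝ) * (x a * y b))]
    have e2 : ∀ α₁ ∈ W n j, ∀ α₂ ∈ W n (β.length + γ.length - j),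
        (shc (α₁ ++ α₂) β γ : ℝ) * (x α₁ * y α₂)
          = ∑ k ∈ Finset.range (β.length + 1), ∑ l ∈ Finset.range (γ.length + 1),
              ((shc α₁ (β.take k) (γ.take l) : ℝ) * x α₁)
                * ((shc α₂ (β.drop k) (γ.drop l) : ℝ) * y α₂) := by
      intro α₁ _ α₂ _
      rw [shc_append]
      push_cast
      rw [Finset.sum_mul]
      apply Finset.sum_congr rfl
      intro k _
      rw [Finset.sum_mul]
      apply Finset.sum_congr rfl
      intro l _
      ring
    rw [Finset.sum_congr rfl (fun α₁ h₁ => Finset.sum_congr rfl (fun α₂ h₂ => e2 α₁ h₁ α₂ h₂))]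
    exact sum_factor _ _ _ _ _ _
  rw [Finset.sum_congr rfl step3]
  have step4 : ∑ j ∈ Finset.range (β.length + γ.length + 1),
      ∑ k ∈ Finset.range (β.length + 1), ∑ l ∈ Finset.range (γ.length + 1),
        (∑ α₁ ∈ W n j, (shc α₁ (β.take k) (γ.take l) : ℝ) * x α₁)
          * (∑ α₂ ∈ W n (β.length + γ.length - j),
              (shc α₂ (β.drop k) (γ.drop l) : ℝ) * y α₂)
      = ∑ k ∈ Finset.range (β.length + 1), ∑ l ∈ Finset.range (γ.length + 1),
          ∑ j ∈ Finset.range (β.length + γ.length + 1),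
            (∑ α₁ ∈ W n j, (shc α₁ (β.take k) (γ.take l) : ℝ) * x α₁)
              * (∑ α₂ ∈ W n (β.length + γ.length - j),
                  (shc α₂ (β.drop k) (γ.drop l) : ℝ) * y α₂) := by
    rw [Finset.sum_comm]
    exact Finset.sum_congr rfl (fun k _ => Finset.sum_comm)
  rw [step4]
  apply Finset.sum_congr rfl
  intro k hk
  apply Finset.sum_congr rfl
  intro l hl
  rw [Finset.mem_range] at hk hl
  have hk' : k ≤ β.length := by omega
  have hl' : l ≤ γ.length := by omega
  rw [Finset.sum_eq_single_of_mem (k + l) (Finset.mem_range.mpr (by omega))]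
  · rw [sum_W_shc, sum_W_shc]
    rw [if_pos (by simp [min_eq_left hk', min_eq_left hl'])]
    rw [if_pos (by simp; omega)]
  · intro j _ hjne
    rw [sum_W_shc]
    rw [if_neg (by simp [min_eq_left hk', min_eq_left hl']; omega)]
    rw [zero_mul]

end Series
namespace Series

variable {n : ℕ}

lemma mul_one' (x : Series n) : mul x one = x := by
  funext α
  rw [mul]
  rw [Finset.sum_eq_single_of_mem α.length (Finset.mem_range.mpr (by omega))]
  · simp [one]
  · intro k hk hkne
    rw [Finset.mem_range] at hk
    have hne : α.drop k ≠ [] := by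
      have : 0 < (α.drop k).length := by simp; omega
      exact List.ne_nil_of_length_pos this
    simp [one, hne]

lemma one_mul' (x : Series n) : mul one x = x := by
  funext α
  rw [mul]
  rw [Finset.sum_eq_single_of_mem 0 (Finset.mem_range.mpr (by omega))]
  · simp [one]
  · intro k hk hkne
    rw [Finset.mem_range] at hk
    have hne : α.take k ≠ [] := by
      have : 0 < (α.take k).length := by simp; omega
      exact List.ne_nil_of_length_pos this
    simp [one, hne]

lemma coprod_sub (u v : Series n) (p : Word n × Word n) :
    coprod (sub u v) p = coprod u p - coprod v p := by
  simp only [coprod, Series.sub]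
  rw [← Finset.sum_sub_distrib]
  apply Finset.sum_congr rfl
  intro f _
  ring

lemma mul2_add2_left (A B C : Series2 n) : mul2 (add2 A B) C = add2 (mul2 A C) (mul2 B C) := by
  funext p
  simp only [mul2, add2]
  rw [← Finset.sum_add_distrib]
  apply Finset.sum_congr rfl
  intro k _
  rw [← Finset.sum_add_distrib]
  apply Finset.sum_congr rfl
  intro l _
  ring

lemma mul2_add2_right (A B C : Series2 n) : mul2 A (add2 B C) = add2 (mul2 A B) (mul2 A C) := by
  funext p
  simp only [mul2, add2]
  rw [← Finset.sum_add_distrib]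
  apply Finset.sum_congr rfl
  intro k _
  rw [← Finset.sum_add_distrib]
  apply Finset.sum_congr rfl
  intro l _
  ring

lemma mul2_tens (a b c d : Series n) : mul2 (tens a b) (tens c d) = tens (mul a c) (mul b d) := by
  funext p
  show _ = mul a c p.1 * mul b d p.2
  rw [mul2, mul, mul, Finset.sum_mul_sum]
  apply Finset.sum_congr rfl
  intro k _
  apply Finset.sum_congr rfl
  intro l _
  simp only [tens]
  ring

lemma shc_single_real (j : Fin n) (β γ : Word n) :
    (shc [j] β γ : ℝ)
      = (if β = [j] ∧ γ = [] then (1:ℝ) else 0) + (if β = [] ∧ γ = [j] then 1 else 0) := by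
  cases β with
  | nil =>
    cases γ with
    | nil => simp [shc]
    | cons c γ' =>
      simp only [shc, shc_nil]
      by_cases hc : c = j
      · subst hc
        by_cases hg : γ' = [] <;> simp [hg]
      · simp [hc]
  | cons b β' =>
    cases γ with
    | nil =>
      simp only [shc, shc_nil]
      by_cases hb : b = j
      · subst hb
        by_cases hg : β' = [] <;> simp [hg]
      · simp [hb]
    | cons c γ' =>
      simp only [shc, shc_nil]
      have h1 : shc ([] : Word n) β' (c :: γ') = 0 := by rw [shc_nil, if_neg]; simp
      have h2 : shc ([] : Word n) (b :: β') γ' = 0 := by rw [shc_nil, if_neg]; simp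
      simp [h1, h2]

lemma coprod_of_inFr {z : Series n} (hz : InFr z) :
    coprod z = add2 (tens z one) (tens one z) := by
  induction hz with
  | zero => funext p; simp [coprod, add2, tens]
  | gen j =>
    funext p
    obtain ⟨β, γ⟩ := p
    rw [coprod_eq_W, sum_W_mono [j] β γ (β.length + γ.length)]
    show _ = add2 (tens (mono [j]) one) (tens one (mono [j])) (β, γ)
    simp only [add2, tens, List.length_singleton, and_self]
    split
    · next h =>
      rw [shc_single_real]
      simp only [mono, one]
      split_ifs <;> simp_all
    · next h =>
      simp only [mono, one]
      split_ifs <;> simp_all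
  | @add x y hx hy ihx ihy =>
    funext p
    have h1 := congrFun ihx p
    have h2 := congrFun ihy p
    have expand : coprod (Series.add x y) p = coprod x p + coprod y p := by
      simp only [coprod, Series.add]
      rw [← Finset.sum_add_distrib]
      apply Finset.sum_congr rfl
      intro f _
      ring
    rw [expand, h1, h2]
    simp only [add2, tens, Series.add]
    ring
  | @smul c x hx ihx =>
    funext p
    have h1 := congrFun ihx p
    have expand : coprod (Series.smul c x) p = c * coprod x p := by
      simp only [coprod, Series.smul, Finset.mul_sum]
      apply Finset.sum_congr rfl
      intro f _
      ring
    rw [expand, h1]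
    simp only [add2, tens, Series.smul]
    ring
  | @bracket x y hx hy ihx ihy =>
    funext p
    rw [coprod_sub, coprod_mul, coprod_mul, ihx, ihy]
    rw [mul2_add2_left, mul2_add2_right, mul2_add2_right, mul2_tens, mul2_tens,
      mul2_tens, mul2_tens, mul2_add2_left, mul2_add2_right, mul2_add2_right,
      mul2_tens, mul2_tens, mul2_tens, mul2_tens]
    simp only [mul_one', one_mul']
    simp only [add2, tens, Series.sub, one]
    ring

end Series
namespace Series

variable {n : ℕ}

noncomputable def Tb (G : ℕ → ℝ) (u δ : Word n) : ℝ :=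
  ∑ k ∈ Finset.range (δ.length + 1), G k * (shc u (δ.take k) ((δ.drop k).reverse) : ℝ)

lemma Tb_nil (G : ℕ → ℝ) (δ : Word n) : Tb G [] δ = if δ = [] then G 0 else 0 := by
  cases δ with
  | nil => simp [Tb, shc_nil]
  | cons d δ' =>
    rw [Tb, if_neg (by simp)]
    apply Finset.sum_eq_zero
    intro k hk
    rw [shc_nil, if_neg]
    · simp
    · rintro ⟨h1, h2⟩
      rw [List.take_eq_nil_iff] at h1
      rcases h1 with h | h
      · subst h
        simp at h2
      · simp at h

lemma Tb_smul (a : ℝ) (G : ℕ → ℝ) (u δ : Word n) :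
    Tb (fun k => a * G k) u δ = a * Tb G u δ := by
  rw [Tb, Tb, Finset.mul_sum]
  apply Finset.sum_congr rfl
  intro k _
  ring

lemma Tb_add (G H : ℕ → ℝ) (u δ : Word n) :
    Tb (fun k => G k + H k) u δ = Tb G u δ + Tb H u δ := by
  rw [Tb, Tb, Tb, ← Finset.sum_add_distrib]
  apply Finset.sum_congr rfl
  intro k _
  ring

lemma drop_rev_eq (δ : Word n) (hδ : δ ≠ []) (k : ℕ) (hk : k < δ.length) :
    (δ.drop k).reverse = δ.getLast hδ :: ((δ.dropLast).drop k).reverse := by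
  conv_lhs => rw [← List.dropLast_append_getLast hδ]
  rw [List.drop_append_of_le_length (by simp; omega), List.reverse_append]
  simp

lemma take_dropLast_eq (δ : Word n) (hδ : δ ≠ []) (k : ℕ) (hk : k < δ.length) :
    δ.take k = δ.dropLast.take k := by
  conv_lhs => rw [← List.dropLast_append_getLast hδ]
  rw [List.take_append_of_le_length (by simp; omega)]

lemma Tb_step (G : ℕ → ℝ) (c : Fin n) (u δ : Word n) :
    Tb G (c :: u) δ
      = (match δ with
          | d :: δ' => if d = c then Tb (fun k => G (k+1)) u δ' else 0
          | [] => 0)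
        + (if δ.getLast? = some c then Tb G u δ.dropLast else 0) := by
  cases δ with
  | nil => simp [Tb, shc_cons_eq]
  | cons d δ' =>
    have hne : (d :: δ') ≠ [] := by simp
    have hsplit : Tb G (c :: u) (d :: δ')
        = (∑ k ∈ Finset.range ((d :: δ').length + 1), G k *
            ((match (d :: δ').take k with
              | b :: β₂ => if b = c then shc u β₂ (((d :: δ').drop k).reverse) else 0
              | [] => 0 : ℕ) : ℝ))
          + (∑ k ∈ Finset.range ((d :: δ').length + 1), G k *
            ((match ((d :: δ').drop k).reverse with
              | e :: γ₂ => if e = c then shc u ((d :: δ').take k) γ₂ else 0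
              | [] => 0 : ℕ) : ℝ)) := by
      rw [Tb, ← Finset.sum_add_distrib]
      apply Finset.sum_congr rfl
      intro k _
      rw [shc_cons_eq]
      push_cast
      rw [mul_add]
      rfl
    rw [hsplit]
    have hA : (∑ k ∈ Finset.range ((d :: δ').length + 1), G k *
            ((match (d :: δ').take k with
              | b :: β₂ => if b = c then shc u β₂ (((d :: δ').drop k).reverse) else 0
              | [] => 0 : ℕ) : ℝ))
        = if d = c then Tb (fun k => G (k+1)) u δ' else 0 := by
      rw [Finset.sum_range_succ']
      simp only [List.take_succ_cons, List.drop_succ_cons, List.take_zero, List.drop_zero]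
      by_cases hd : d = c
      · rw [if_pos hd, Tb]
        simp only [hd, if_pos rfl]
        simp [List.length_cons]
      · rw [if_neg hd]
        simp [hd]
    have hB : (∑ k ∈ Finset.range ((d :: δ').length + 1), G k *
            ((match ((d :: δ').drop k).reverse with
              | e :: γ₂ => if e = c then shc u ((d :: δ').take k) γ₂ else 0
              | [] => 0 : ℕ) : ℝ))
        = if (d :: δ').getLast? = some c then Tb G u (d :: δ').dropLast else 0 := by
      rw [Finset.sum_range_succ]
      have hlast : (d :: δ').drop ((d :: δ').length) = [] := by
        apply List.drop_length
      rw [hlast]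
      simp only [List.reverse_nil]
      rw [show ((match ([] : Word n) with
              | e :: γ₂ => if e = c then shc u ((d :: δ').take (d :: δ').length) γ₂ else 0
              | [] => 0 : ℕ) : ℝ) = 0 from by simp]
      rw [mul_zero, add_zero]
      have hstep : ∀ k ∈ Finset.range ((d :: δ').length),
          G k * ((match ((d :: δ').drop k).reverse with
              | e :: γ₂ => if e = c then shc u ((d :: δ').take k) γ₂ else 0
              | [] => 0 : ℕ) : ℝ)
          = G k * ((if (d :: δ').getLast hne = c
              then shc u ((d :: δ').dropLast.take k) (((d :: δ').dropLast.drop k).reverse)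
              else 0 : ℕ) : ℝ) := by
        intro k hk
        rw [Finset.mem_range] at hk
        rw [drop_rev_eq (d :: δ') hne k hk, take_dropLast_eq (d :: δ') hne k hk]
      rw [Finset.sum_congr rfl hstep]
      rw [List.getLast?_eq_getLast hne]
      by_cases hg : (d :: δ').getLast hne = c
      · rw [if_pos (by rw [hg]), Tb]
        apply Finset.sum_congr
        · congr 1
          simp
        · intro k _
          rw [if_pos hg]
      · rw [if_neg (by simp [hg])]
        apply Finset.sum_eq_zero
        intro k _
        rw [if_neg hg]
        simp
    rw [hA, hB]

end Series
namespace Series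

variable {n : ℕ}

noncomputable def Eb (u δ : Word n) : ℝ := Tb (fun k => (-1:ℝ)^k) u δ

lemma Eb_eq : ∀ (u δ : Word n), Eb u δ = if u = [] ∧ δ = [] then 1 else 0 := by
  intro u
  induction u with
  | nil =>
    intro δ
    rw [Eb, Tb_nil]
    cases δ <;> simp
  | cons c u ih =>
    intro δ
    rw [Eb, Tb_step]
    have hfun : (fun k => ((-1:ℝ))^(k+1)) = fun k => (-1) * (-1:ℝ)^k := by
      funext k; ring
    cases δ with
    | nil =>
      rw [if_neg (show ¬(([] : Word n).getLast? = some c) by simp)]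
      rw [if_neg (show ¬(c :: u = [] ∧ ([] : Word n) = []) by simp)]
      norm_num
    | cons d δ' =>
      rw [if_neg (show ¬(c :: u = [] ∧ d :: δ' = []) by simp)]
      show (if d = c then Tb (fun k => (-1:ℝ)^(k+1)) u δ' else 0)
          + (if (d :: δ').getLast? = some c
              then Tb (fun k => (-1:ℝ)^k) u (d :: δ').dropLast else 0) = 0
      rw [hfun, Tb_smul]
      have h1 := ih δ'
      have h2 := ih (d :: δ').dropLast
      rw [Eb] at h1 h2
      rw [h1, h2]
      by_cases hu : u = []
      · subst hu
        by_cases hδ : δ' = []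
        · subst hδ
          by_cases hd : d = c <;> simp [hd]
        · have hdl : (d :: δ').dropLast ≠ [] := by
            have hlen : ((d :: δ').dropLast).length = δ'.length := by simp
            intro h
            rw [h] at hlen
            exact hδ (List.length_eq_zero_iff.mp hlen.symm)
          simp [hδ, hdl]
      · simp [hu]

noncomputable def Rb : Word n → Series n
  | [] => fun _ => 0
  | [c] => mono [c]
  | c :: d :: u => sub (mul (mono [c]) (Rb (d :: u))) (mul (Rb (d :: u)) (mono [c]))

lemma Rb_inFr : ∀ u : Word n, InFr (Rb u)
  | [] => InFr.zero
  | [c] => InFr.gen c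
  | c :: d :: u => by
      show InFr (sub (mul (mono [c]) (Rb (d :: u))) (mul (Rb (d :: u)) (mono [c])))
      exact InFr.bracket (InFr.gen c) (Rb_inFr (d :: u))

lemma mono_mul (c : Fin n) (x : Series n) (δ : Word n) :
    mul (mono [c]) x δ = (match δ with | d :: δ' => if d = c then x δ' else 0 | [] => 0) := by
  cases δ with
  | nil => simp [mul, mono]
  | cons d δ' =>
    rw [mul]
    rw [Finset.sum_eq_single_of_mem 1 (Finset.mem_range.mpr (by simp))]
    · show mono [c] [d] * x δ' = _
      by_cases hd : d = c <;> simp [mono, hd]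
    · intro k hk hk1
      rw [Finset.mem_range] at hk
      rw [mono, if_neg, zero_mul]
      intro h
      apply hk1
      have hlen : min k ((d :: δ').length) = 1 := by
        have h2 := congrArg List.length h
        simpa [List.length_take] using h2
      rw [min_eq_left (by simp at hk ⊢; omega)] at hlen
      exact hlen

lemma mul_mono (c : Fin n) (x : Series n) (δ : Word n) :
    mul x (mono [c]) δ = if δ.getLast? = some c then x δ.dropLast else 0 := by
  cases δ with
  | nil => simp [mul, mono]
  | cons d δ' =>
    have hne : (d :: δ') ≠ [] := by simp
    rw [mul]
    rw [Finset.sum_eq_single_of_mem ((d :: δ').length - 1) (Finset.mem_range.mpr (by omega))]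
    · have htake : (d :: δ').take ((d :: δ').length - 1) = (d :: δ').dropLast :=
        List.dropLast_eq_take.symm
      have hdropgen : ∀ j, j = (d :: δ').length - 1 →
          (d :: δ').drop j = [(d :: δ').getLast hne] := by
        intro j hj
        have hj' : j = δ'.length := by simp at hj; omega
        conv_lhs => rw [← List.dropLast_append_getLast hne]
        rw [List.drop_append_of_le_length (by simp [hj'])]
        rw [List.drop_eq_nil_of_le (by simp [hj'])]
        rfl
      rw [htake, hdropgen _ rfl, List.getLast?_eq_getLast hne]
      by_cases hg : (d :: δ').getLast hne = c
      · simp [mono, hg]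
      · rw [if_neg (by simp [hg]), mono, if_neg (by simp [hg]), mul_zero]
    · intro k hk hk1
      rw [Finset.mem_range] at hk
      rw [mono, if_neg, mul_zero]
      intro h
      apply hk1
      have hlen : (d :: δ').length - k = 1 := by
        have h2 := congrArg List.length h
        simpa [List.length_drop] using h2
      simp at hlen ⊢
      omega

end Series
namespace Series

variable {n : ℕ}

lemma Tb_key : ∀ (u δ : Word n),
    Tb (fun k => (k:ℝ) * (-1:ℝ)^k) u δ = (-1:ℝ)^(δ.length) * Rb u δ := by
  intro u
  induction u with
  | nil =>
    intro δ
    cases δ <;> simp [Tb_nil, Rb]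
  | cons c u ih =>
    intro δ
    have hTsucc : ∀ δ'' : Word n,
        Tb (fun k => ((k+1 : ℕ):ℝ) * (-1:ℝ)^(k+1)) u δ''
          = -Tb (fun k => (k:ℝ) * (-1:ℝ)^k) u δ'' - Eb u δ'' := by
      intro δ''
      have hfe : (fun k => ((k+1 : ℕ):ℝ) * (-1:ℝ)^(k+1))
          = (fun k : ℕ => (-1:ℝ) * ((k:ℝ)*(-1:ℝ)^k) + (-1:ℝ) * ((-1:ℝ)^k)) := by
        funext k; push_cast; ring
      rw [hfe, Tb_add, Tb_smul, Tb_smul, Eb]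
      ring
    rw [Tb_step]
    cases u with
    | nil =>
      cases δ with
      | nil =>
        show (0:ℝ) + (if ([] : Word n).getLast? = some c
            then Tb (fun k => (k:ℝ) * (-1:ℝ)^k) [] ([] : Word n).dropLast else 0)
          = (-1:ℝ)^(0:ℕ) * Rb [c] []
        simp [Tb_nil, Rb, mono]
      | cons d δ' =>
        show (if d = c then Tb (fun k => ((k+1 : ℕ):ℝ) * (-1:ℝ)^(k+1)) [] δ' else 0)
            + (if (d :: δ').getLast? = some c
                then Tb (fun k => (k:ℝ) * (-1:ℝ)^k) [] (d :: δ').dropLast else 0)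
          = (-1:ℝ)^((d :: δ').length) * Rb [c] (d :: δ')
        rw [hTsucc δ', Tb_nil, Tb_nil, Eb_eq]
        have h2 : (if (d :: δ').getLast? = some c
            then (if (d :: δ').dropLast = [] then ((0:ℕ):ℝ) * (-1:ℝ)^(0:ℕ) else 0) else 0)
              = 0 := by
          split
          · split <;> norm_num
          · rfl
        rw [h2, add_zero]
        show _ = (-1:ℝ)^((d :: δ').length) * mono [c] (d :: δ')
        by_cases hd : d = c
        · subst hd
          by_cases hδ : δ' = []
          · subst hδ; simp [mono]
          · simp [hδ, mono]
        · have hne2 : (d :: δ') ≠ [c] := by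
            intro h
            exact hd (by injection h)
          simp [hd, mono, hne2]
    | cons e u' =>
      cases δ with
      | nil =>
        show (0:ℝ) + (if ([] : Word n).getLast? = some c
            then Tb (fun k => (k:ℝ) * (-1:ℝ)^k) (e :: u') ([] : Word n).dropLast else 0)
          = (-1:ℝ)^(0:ℕ) * Rb (c :: e :: u') []
        rw [if_neg (show ¬(([] : Word n).getLast? = some c) by simp)]
        show (0:ℝ) + 0 = (-1:ℝ)^(0:ℕ)
          * (sub (mul (mono [c]) (Rb (e :: u'))) (mul (Rb (e :: u')) (mono [c])) [])
        rw [Series.sub, mono_mul, mul_mono]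
        simp
      | cons d δ' =>
        show (if d = c then Tb (fun k => ((k+1 : ℕ):ℝ) * (-1:ℝ)^(k+1)) (e :: u') δ' else 0)
            + (if (d :: δ').getLast? = some c
                then Tb (fun k => (k:ℝ) * (-1:ℝ)^k) (e :: u') (d :: δ').dropLast else 0)
          = (-1:ℝ)^((d :: δ').length) * Rb (c :: e :: u') (d :: δ')
        rw [hTsucc δ', Eb_eq, if_neg (show ¬(e :: u' = [] ∧ δ' = []) by simp), sub_zero,
          ih δ', ih ((d :: δ').dropLast)]
        have hdl : (((d :: δ').dropLast).length) = δ'.length := by simp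
        rw [hdl]
        show _ = (-1:ℝ)^((d :: δ').length)
          * (sub (mul (mono [c]) (Rb (e :: u'))) (mul (Rb (e :: u')) (mono [c])) (d :: δ'))
        rw [Series.sub, mono_mul, mul_mono]
        show _ = (-1:ℝ)^((d :: δ').length)
          * ((if d = c then Rb (e :: u') δ' else 0)
              - (if (d :: δ').getLast? = some c then Rb (e :: u') ((d :: δ').dropLast) else 0))
        by_cases hd : d = c <;> by_cases hP : (d :: δ').getLast? = some c <;>
          simp only [hd, hP, if_true, if_false, if_pos, if_neg, not_false_iff,
            List.length_cons, pow_succ] <;> first | (split_ifs <;> ring) | ring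

end Series
namespace Series

variable {n : ℕ}

lemma Tb_vanish (G : ℕ → ℝ) (α δ : Word n) (h : δ.length ≠ α.length) : Tb G α δ = 0 := by
  rw [Tb]
  apply Finset.sum_eq_zero
  intro k hk
  rw [Finset.mem_range] at hk
  rw [shc_length α _ _ (by simp; omega)]
  simp

lemma Rb_length (α δ : Word n) (h : δ.length ≠ α.length) : Rb α δ = 0 := by
  have h1 := Tb_key α δ
  rw [Tb_vanish _ α δ h] at h1
  have hne : ((-1:ℝ))^(δ.length) ≠ 0 := pow_ne_zero _ (by norm_num)
  exact (mul_eq_zero.mp h1.symm).resolve_left hne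

lemma main_rev (z : Series n) (hz : coprod z = add2 (tens z one) (tens one z)) (δ : Word n) :
    (δ.length : ℝ) * z δ = ∑ α ∈ W n δ.length, z α * Rb α δ := by
  have way1 : ∑ k ∈ Finset.range (δ.length + 1),
      (k:ℝ) * (-1:ℝ)^k * coprod z (δ.take k, (δ.drop k).reverse)
        = (-1:ℝ)^(δ.length) * ((δ.length : ℝ) * z δ) := by
    rw [hz]
    rw [Finset.sum_eq_single_of_mem δ.length (Finset.mem_range.mpr (by omega))]
    · show (δ.length : ℝ) * (-1:ℝ)^(δ.length)
          * (z (δ.take δ.length) * one ((δ.drop δ.length).reverse)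
              + one (δ.take δ.length) * z ((δ.drop δ.length).reverse)) = _
      rw [List.take_length, List.drop_length]
      by_cases hδ : δ = []
      · subst hδ; simp
      · rw [show one ([] : Word n).reverse = 1 from by simp [one]]
        rw [show Series.one δ = 0 from by simp [one, hδ]]
        ring
    · intro k hk hkne
      rw [Finset.mem_range] at hk
      have hklt : k < δ.length := by omega
      show (k:ℝ) * (-1:ℝ)^k * (z (δ.take k) * one ((δ.drop k).reverse)
          + one (δ.take k) * z ((δ.drop k).reverse)) = 0
      have h1 : one ((δ.drop k).reverse) = 0 := by
        rw [one, if_neg]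
        simp only [List.reverse_eq_nil_iff]
        intro h
        rw [List.drop_eq_nil_iff] at h
        omega
      by_cases hk0 : k = 0
      · subst hk0; simp
      · have h2 : one (δ.take k) = 0 := by
          rw [one, if_neg]
          rw [List.take_eq_nil_iff]
          rintro (h | h)
          · exact hk0 h
          · rw [h] at hklt; simp at hklt
        rw [h1, h2]
        ring
  have way2 : ∑ k ∈ Finset.range (δ.length + 1),
      (k:ℝ) * (-1:ℝ)^k * coprod z (δ.take k, (δ.drop k).reverse)
        = ∑ α ∈ W n δ.length, z α * ((-1:ℝ)^(δ.length) * Rb α δ) := by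
    have hc : ∀ k ∈ Finset.range (δ.length + 1),
        (k:ℝ) * (-1:ℝ)^k * coprod z (δ.take k, (δ.drop k).reverse)
          = ∑ α ∈ W n δ.length,
              (k:ℝ) * (-1:ℝ)^k * ((shc α (δ.take k) ((δ.drop k).reverse) : ℝ) * z α) := by
      intro k hk
      rw [Finset.mem_range] at hk
      rw [coprod_eq_W]
      rw [show (δ.take k).length + ((δ.drop k).reverse).length = δ.length from by simp; omega]
      rw [Finset.mul_sum]
    rw [Finset.sum_congr rfl hc, Finset.sum_comm]
    apply Finset.sum_congr rfl
    intro α hα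
    rw [← Tb_key α δ, Tb, Finset.mul_sum]
    apply Finset.sum_congr rfl
    intro k _
    ring
  have := way1.symm.trans way2
  have hcancel : ∀ a b : ℝ, (-1:ℝ)^(δ.length) * a = (-1:ℝ)^(δ.length) * b → a = b := by
    intro a b h
    exact mul_left_cancel₀ (pow_ne_zero _ (by norm_num)) h
  apply hcancel
  rw [this, Finset.mul_sum]
  apply Finset.sum_congr rfl
  intro α _
  ring

lemma z_nil_zero (z : Series n) (hz : coprod z = add2 (tens z one) (tens one z)) :
    z [] = 0 := by
  have h := congrFun hz (([] : Word n), ([] : Word n))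
  rw [coprod_eq_W] at h
  have hW : W n (([] : Word n).length + ([] : Word n).length) = {([] : Word n)} := by
    ext α
    simp [mem_W, List.length_eq_zero_iff]
  rw [hW, Finset.sum_singleton] at h
  have : (shc ([] : Word n) [] [] : ℝ) = 1 := by rw [shc_nil]; simp
  rw [this, one_mul] at h
  have hr : add2 (tens z one) (tens one z) (([] : Word n), ([] : Word n))
      = z [] + z [] := by
    show z [] * one [] + one [] * z [] = _
    simp [one]
  rw [hr] at h
  linarith

lemma InFr_sum {ι : Type*} [DecidableEq ι] (s : Finset ι) (g : ι → Series n)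
    (h : ∀ i ∈ s, InFr (g i)) : InFr (fun δ => ∑ i ∈ s, g i δ) := by
  induction s using Finset.induction_on with
  | empty =>
    rw [show (fun δ : Word n => ∑ i ∈ (∅ : Finset ι), g i δ) = (fun _ => (0:ℝ)) from
      by funext δ; simp]
    exact InFr.zero
  | insert a s ha ih =>
    rw [show (fun δ : Word n => ∑ i ∈ insert a s, g i δ)
        = Series.add (g a) (fun δ => ∑ i ∈ s, g i δ) from
      by funext δ; simp [Series.add, Finset.sum_insert ha]]
    exact InFr.add (h a (Finset.mem_insert_self a s))
      (ih (fun i hi => h i (Finset.mem_insert_of_mem hi)))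

end Series


open Series


/-- Friedrichs' criterion: a polynomial `z ∈ Afr_n` (finitely supported
series) lies in the free Lie subalgebra `fr_n` if and only if
`Δ(z) = z ⊗ 1 + 1 ⊗ z`. -/
theorem friedrichs_criterion {n : ℕ} (z : Series n)
    (hfin : Set.Finite {α : Word n | z α ≠ 0}) :
    InFr z ↔ coprod z = add2 (tens z one) (tens one z) := by
  constructor
  · exact coprod_of_inFr
  · intro hz
    have hz0 : z [] = 0 := z_nil_zero z hz
    classical
    set S₀ : Finset (Word n) := hfin.toFinset.filter (fun α => α ≠ []) with hS₀
    have hy : InFr (fun δ => ∑ α ∈ S₀, (z α / α.length) * Rb α δ) := by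
      apply InFr_sum
      intro α _
      exact InFr.smul _ (Rb_inFr α)
    have hyz : (fun δ => ∑ α ∈ S₀, (z α / α.length) * Rb α δ) = z := by
      funext δ
      by_cases hδ : δ = []
      · subst hδ
        rw [hz0]
        apply Finset.sum_eq_zero
        intro α hα
        have hαne : α ≠ [] := by
          have := Finset.mem_filter.mp hα
          exact this.2
        have hlen : ([] : Word n).length ≠ α.length := by
          simp
          intro h
          exact hαne (List.length_eq_zero_iff.mp h.symm)
        rw [Rb_length α [] hlen, mul_zero]
      · have hm : ((δ.length : ℝ)) ≠ 0 := by
          simp only [ne_eq, Nat.cast_eq_zero]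
          intro h
          exact hδ (List.length_eq_zero_iff.mp h)
        apply mul_left_cancel₀ hm
        rw [main_rev z hz δ, Finset.mul_sum]
        have hterm : ∀ α ∈ S₀, (δ.length : ℝ) * ((z α / α.length) * Rb α δ)
            = z α * Rb α δ := by
          intro α _
          by_cases hlen : δ.length = α.length
          · rw [← hlen]
            field_simp
          · rw [Rb_length α δ hlen]
            ring
        rw [Finset.sum_congr rfl hterm]
        calc ∑ α ∈ S₀, z α * Rb α δ
            = ∑ α ∈ S₀ ∪ W n δ.length, z α * Rb α δ := by
              apply Finset.sum_subset Finset.subset_union_left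
              intro α hαu hαn
              rcases Finset.mem_union.mp hαu with h | h
              · exact absurd h hαn
              · have hαlen : α.length = δ.length := mem_W.mp h
                have hαne : α ≠ [] := by
                  intro he
                  rw [he] at hαlen
                  exact hδ (List.length_eq_zero_iff.mp hαlen.symm)
                have hzα : z α = 0 := by
                  by_contra hne
                  exact hαn (Finset.mem_filter.mpr ⟨hfin.mem_toFinset.mpr hne, hαne⟩)
                rw [hzα, zero_mul]
          _ = ∑ α ∈ W n δ.length, z α * Rb α δ := by
              symm
              apply Finset.sum_subset Finset.subset_union_right
              intro α hαu hαn
              have hαlen : δ.length ≠ α.length := by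
                intro h
                exact hαn (mem_W.mpr h.symm)
              rw [Rb_length α δ hαlen, mul_zero]
    rw [← hyz]
    exact hy
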